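/- Fix m ≥ 1, n×n real matrices Φ₁,…,Φ_m, a symmetric positive semidefinite n×n matrix q̃, and k ∈ ℕ. Let ξ_{i+1} = Φ_{σ(i)} ξ_i for i ≥ k, let Ψ = Φ_{σ(k+m−1)} ⋯ Φ_{σ(k)} be the monodromy matrix, Π_i = Φ_{σ(k+i−1)} ⋯ Φ_{σ(k)} for 1 ≤ i ≤ m, and set M = Σ_{i=1}^{m} Π_iᵀ q̃ Π_i. Assume the family (j ↦ (Ψᵀ)ʲ M Ψʲ) is summable and set P_ξ = Σ_{j=0}^{∞} (Ψᵀ)ʲ M Ψʲ. Then the infinite-horizon state cost satisfies Σ_{i=0}^{∞} ξ_{k+i+1}ᵀ q̃ ξ_{k+i+1} = ξ_kᵀ P_ξ ξ_k, and P_ξ satisfies the Lyapunov equation P_ξ = Ψᵀ P_ξ Ψ + M. -/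

import Mathlib

open Matrix

section Aux

variable {n : ℕ}

/-- Applying a linear map on a finite-dimensional Hausdorff TVS commutes with `tsum`. -/
private lemma linmap_tsum {E F : Type*} [AddCommGroup E] [Module ℝ E] [TopologicalSpace E]
    [IsTopologicalAddGroup E] [ContinuousSMul ℝ E] [T2Space E] [FiniteDimensional ℝ E]
    [AddCommGroup F] [Module ℝ F] [TopologicalSpace F] [IsTopologicalAddGroup F]
    [ContinuousSMul ℝ F] [T2Space F]
    (L : E →ₗ[ℝ] F) {f : ℕ → E} (hf : Summable f) :
    L (∑' j, f j) = ∑' j, L (f j) := by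
  have hc : Continuous L := L.continuous_of_finiteDimensional
  exact (hf.hasSum.map L.toAddMonoidHom hc).tsum_eq.symm

private lemma summap {E : Type*} [AddCommGroup E] [Module ℝ E] [TopologicalSpace E]
    [IsTopologicalAddGroup E] [ContinuousSMul ℝ E] [T2Space E] [FiniteDimensional ℝ E]
    (L : E →ₗ[ℝ] ℝ) {f : ℕ → E} (hf : Summable f) :
    Summable fun j => L (f j) := by
  have hc : Continuous L := L.continuous_of_finiteDimensional
  exact (hf.hasSum.map L.toAddMonoidHom hc).summable

private lemma quad_form_eq (A B : Matrix (Fin n) (Fin n) ℝ) (x : Fin n → ℝ) :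
    (A *ᵥ x) ⬝ᵥ (B *ᵥ (A *ᵥ x)) = x ⬝ᵥ ((Aᵀ * B * A) *ᵥ x) := by
  rw [mulVec_mulVec, ← vecMul_transpose, dotProduct_mulVec, vecMul_vecMul,
    ← mul_assoc, ← dotProduct_mulVec]

/-- The quadratic-form linear map `A ↦ x ⬝ᵥ A *ᵥ x`. -/
private def quadL (x : Fin n → ℝ) : Matrix (Fin n) (Fin n) ℝ →ₗ[ℝ] ℝ where
  toFun A := x ⬝ᵥ (A *ᵥ x)
  map_add' A B := by simp [add_mulVec, dotProduct_add]
  map_smul' c A := by simp [smul_mulVec, dotProduct_smul]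

/-- The map `A ↦ Ψᵀ * A * Ψ` as a linear map. -/
private def conjL (Ψ : Matrix (Fin n) (Fin n) ℝ) :
    Matrix (Fin n) (Fin n) ℝ →ₗ[ℝ] Matrix (Fin n) (Fin n) ℝ where
  toFun A := Ψᵀ * A * Ψ
  map_add' A B := by noncomm_ring
  map_smul' c A := by simp [Matrix.mul_smul, Matrix.smul_mul]

end Aux

/-- State-cost formula for a linear m-periodic closed loop.  `σ k = (k % m) + 1`;
`ξ_{i+1} = Φ_{σ(i)} ξ_i` for `i ≥ k`; `Π_i` are partial products with `Π₀ = I`,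
`Ψ = Π_m` the monodromy matrix, `M = Σ_{i=1}^m Π_iᵀ q̃ Π_i`.  If `j ↦ (Ψᵀ)ʲ M Ψʲ` is
summable with sum `P_ξ`, then `Σ_{i=0}^∞ ξ_{k+i+1}ᵀ q̃ ξ_{k+i+1} = ξ_kᵀ P_ξ ξ_k` and
`P_ξ = Ψᵀ P_ξ Ψ + M`. -/
theorem stmt_8 {n : ℕ} (m : ℕ) (hm : 1 ≤ m)
    (Φ : ℕ → Matrix (Fin n) (Fin n) ℝ)
    (qt : Matrix (Fin n) (Fin n) ℝ) (hqt : qt.PosSemidef)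
    (σ : ℕ → ℕ) (hσ : ∀ k, σ k = k % m + 1)
    (k : ℕ) (ξ : ℕ → Fin n → ℝ)
    (hdyn : ∀ i, k ≤ i → ξ (i + 1) = (Φ (σ i)).mulVec (ξ i))
    (Pmat : ℕ → Matrix (Fin n) (Fin n) ℝ)
    (hPmat0 : Pmat 0 = 1)
    (hPmat : ∀ i, Pmat (i + 1) = Φ (σ (k + i)) * Pmat i)
    (Ψ : Matrix (Fin n) (Fin n) ℝ) (hΨ : Ψ = Pmat m)
    (M : Matrix (Fin n) (Fin n) ℝ)
    (hM : M = ∑ i ∈ Finset.Icc 1 m, (Pmat i)ᵀ * qt * Pmat i)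
    (hsum : Summable fun j : ℕ => (Ψᵀ) ^ j * M * Ψ ^ j)
    (Pξ : Matrix (Fin n) (Fin n) ℝ)
    (hPξ : Pξ = ∑' j : ℕ, (Ψᵀ) ^ j * M * Ψ ^ j) :
    (∑' i : ℕ, (ξ (k + i + 1)) ⬝ᵥ (qt.mulVec (ξ (k + i + 1))))
        = (ξ k) ⬝ᵥ (Pξ.mulVec (ξ k))
      ∧ Pξ = Ψᵀ * Pξ * Ψ + M := by
  have : NeZero m := ⟨by omega⟩
  set x := ξ k with hx
  -- trajectory formula
  have hξ : ∀ a : ℕ, ξ (k + a) = (Pmat a) *ᵥ x := by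
    intro a
    induction a with
    | zero => simp [hPmat0, hx]
    | succ a ih =>
      have h1 : k + (a + 1) = (k + a) + 1 := by omega
      rw [h1, hdyn (k + a) (by omega), ih, mulVec_mulVec, ← hPmat]
  -- periodicity of σ
  have hσper : ∀ t : ℕ, σ (t + m) = σ t := by
    intro t; rw [hσ, hσ, Nat.add_mod_right]
  -- Pmat (i + m) = Pmat i * Ψ
  have hPm : ∀ i : ℕ, Pmat (i + m) = Pmat i * Ψ := by
    intro i
    induction i with
    | zero => simp [hPmat0, hΨ]
    | succ i ih =>
      have h1 : i + 1 + m = (i + m) + 1 := by omega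
      rw [h1, hPmat, ih, hPmat, mul_assoc]
      congr 2
      have h2 : k + (i + m) = (k + i) + m := by omega
      rw [h2, hσper]
  -- Pmat (j*m + i) = Pmat i * Ψ^j
  have hPjm : ∀ j i : ℕ, Pmat (j * m + i) = Pmat i * Ψ ^ j := by
    intro j
    induction j with
    | zero => intro i; simp
    | succ j ih =>
      intro i
      have h1 : (j + 1) * m + i = (j * m + i) + m := by ring
      rw [h1, hPm, ih, pow_succ, mul_assoc]
  -- the general term family
  set T : Fin m → Matrix (Fin n) (Fin n) ℝ :=
    fun r => (Pmat ((r : ℕ) + 1))ᵀ * qt * Pmat ((r : ℕ) + 1) with hT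
  set F : ℕ × Fin m → ℝ := fun p => quadL x ((Ψᵀ) ^ p.1 * T p.2 * Ψ ^ p.1) with hF
  -- nonnegativity of terms
  have hFnn : ∀ p, 0 ≤ F p := by
    intro ⟨j, r⟩
    have h0 := hqt.dotProduct_mulVec_nonneg ((Pmat ((r : ℕ) + 1) * Ψ ^ j) *ᵥ x)
    simp only [RCLike.star_def, star_trivial] at h0
    have h2 := quad_form_eq (Pmat ((r : ℕ) + 1) * Ψ ^ j) qt x
    rw [h2] at h0
    have h3 : (Pmat ((r : ℕ) + 1) * Ψ ^ j)ᵀ * qt * (Pmat ((r : ℕ) + 1) * Ψ ^ j)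
        = (Ψᵀ) ^ j * T r * Ψ ^ j := by
      rw [transpose_mul, transpose_pow, hT]
      noncomm_ring
    rw [h3] at h0
    exact h0
  -- M as a sum over Fin m
  have hMsum : M = ∑ r : Fin m, T r := by
    rw [hM, hT]
    rw [show Finset.Icc 1 m = Finset.Ico 1 (m + 1) from (Finset.Ico_add_one_right_eq_Icc 1 m),
      Finset.sum_Ico_eq_sum_range]
    rw [Fin.sum_univ_eq_sum_range (fun r => (Pmat (r + 1))ᵀ * qt * Pmat (r + 1)) m]
    simp [add_comm]
  -- row sums
  have hrow : ∀ j : ℕ, ∑ r : Fin m, F (j, r) = quadL x ((Ψᵀ) ^ j * M * Ψ ^ j) := by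
    intro j
    rw [hF]
    rw [← map_sum (quadL x) _ Finset.univ]
    congr 1
    rw [hMsum, Finset.mul_sum, Finset.sum_mul]
  -- summability of the quadratic-form sums
  have hq : Summable fun j : ℕ => quadL x ((Ψᵀ) ^ j * M * Ψ ^ j) := summap _ hsum
  -- summability of F
  have hFsum : Summable F := by
    rw [summable_prod_of_nonneg hFnn]
    refine ⟨fun j => Summable.of_finite, ?_⟩
    have : (fun j : ℕ => ∑' r : Fin m, F (j, r))
        = fun j : ℕ => quadL x ((Ψᵀ) ^ j * M * Ψ ^ j) := by
      funext j
      rw [tsum_fintype, hrow]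
    rw [this]
    exact hq
  constructor
  · -- state cost identity
    have hterm : ∀ i : ℕ, (ξ (k + i + 1)) ⬝ᵥ (qt *ᵥ (ξ (k + i + 1)))
        = quadL x ((Pmat (i + 1))ᵀ * qt * Pmat (i + 1)) := by
      intro i
      have h1 : k + i + 1 = k + (i + 1) := by omega
      rw [h1, hξ (i + 1)]
      exact quad_form_eq (Pmat (i + 1)) qt x
    calc (∑' i : ℕ, (ξ (k + i + 1)) ⬝ᵥ (qt *ᵥ (ξ (k + i + 1))))
        = ∑' i : ℕ, quadL x ((Pmat (i + 1))ᵀ * qt * Pmat (i + 1)) := by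
          exact tsum_congr hterm
      _ = ∑' p : ℕ × Fin m, F p := by
          rw [← (Nat.divModEquiv m).symm.tsum_eq
            (fun a : ℕ => quadL x ((Pmat (a + 1))ᵀ * qt * Pmat (a + 1)))]
          refine tsum_congr fun p => ?_
          obtain ⟨j, r⟩ := p
          have h1 : (Nat.divModEquiv m).symm (j, r) = j * m + (r : ℕ) := rfl
          rw [h1]
          have h2 : j * m + (r : ℕ) + 1 = j * m + ((r : ℕ) + 1) := by omega
          rw [h2, hPjm]
          have h3 : (Pmat ((r : ℕ) + 1) * Ψ ^ j)ᵀ * qt * (Pmat ((r : ℕ) + 1) * Ψ ^ j)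
              = (Ψᵀ) ^ j * T r * Ψ ^ j := by
            rw [transpose_mul, transpose_pow, hT]
            noncomm_ring
          rw [h3]
      _ = ∑' j : ℕ, ∑' r : Fin m, F (j, r) := hFsum.tsum_prod' fun j => Summable.of_finite
      _ = ∑' j : ℕ, quadL x ((Ψᵀ) ^ j * M * Ψ ^ j) := by
          refine tsum_congr fun j => ?_
          rw [tsum_fintype, hrow]
      _ = quadL x Pξ := by
          rw [hPξ, linmap_tsum (quadL x) hsum]
      _ = x ⬝ᵥ (Pξ *ᵥ x) := rfl
  · -- Lyapunov equation
    have h0 : Pξ = ((Ψᵀ) ^ 0 * M * Ψ ^ 0) + ∑' j : ℕ, (Ψᵀ) ^ (j + 1) * M * Ψ ^ (j + 1) := by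
      rw [hPξ]
      exact hsum.tsum_eq_zero_add
    have h1 : (fun j : ℕ => (Ψᵀ) ^ (j + 1) * M * Ψ ^ (j + 1))
        = fun j : ℕ => conjL Ψ ((Ψᵀ) ^ j * M * Ψ ^ j) := by
      funext j
      show (Ψᵀ) ^ (j + 1) * M * Ψ ^ (j + 1) = Ψᵀ * ((Ψᵀ) ^ j * M * Ψ ^ j) * Ψ
      rw [pow_succ' Ψᵀ j, pow_succ Ψ j]
      simp only [mul_assoc]
    have h2 : Pξ = M + Ψᵀ * Pξ * Ψ := by
      conv_lhs => rw [h0]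
      rw [h1, ← linmap_tsum (conjL Ψ) hsum, ← hPξ]
      show 1 * M * 1 + Ψᵀ * Pξ * Ψ = M + Ψᵀ * Pξ * Ψ
      rw [one_mul, mul_one]
    conv_lhs => rw [h2]
    rw [add_comm]
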